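/- Let Π : ℤ^d → ℝ be symmetric and summable, and set S = ∑_x |Π(x)| and S_k = ∑_x (1 - cos(k·x))|Π(x)|. Then for all k, l ∈ ℝ^d: |Π̂(l+k) - Π̂(l)| ≤ (S · 2 S_k)^{1/2} + S_k, where Π̂(l) = ∑_x cos(l·x)Π(x). -/

import Mathlib

/-- Fourier transform on `ℤ^d` of a symmetric summable function (via cosines). -/
noncomputable def fourierZd (d : ℕ) (Pi : (Fin d → ℤ) → ℝ) (l : Fin d → ℝ) : ℝ :=
  ∑' x : Fin d → ℤ, Real.cos (∑ i, l i * (x i : ℝ)) * Pi x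

lemma cos_increment (a b : ℝ) :
    |Real.cos (a + b) - Real.cos a| ≤ |Real.sin b| + (1 - Real.cos b) := by
  have h : Real.cos (a + b) - Real.cos a
      = Real.cos a * (Real.cos b - 1) - Real.sin a * Real.sin b := by
    rw [Real.cos_add]; ring
  rw [h]
  have h1 : |Real.cos a * (Real.cos b - 1) - Real.sin a * Real.sin b|
      ≤ |Real.cos a * (Real.cos b - 1)| + |Real.sin a * Real.sin b| := abs_sub _ _
  refine h1.trans ?_
  rw [abs_mul, abs_mul]
  have hc := Real.abs_cos_le_one a
  have hs := Real.abs_sin_le_one a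
  have hb : |Real.cos b - 1| = 1 - Real.cos b := by
    rw [abs_sub_comm, abs_of_nonneg (by linarith [Real.cos_le_one b])]
  rw [hb]
  have := abs_nonneg (Real.sin b)
  nlinarith [Real.cos_le_one b, abs_nonneg (Real.sin b)]

/-- For symmetric summable `Π : ℤ^d → ℝ`, with `S = ∑|Π|` and
`S_k = ∑ (1-cos(k·x))|Π(x)|`, one has `|Π̂(l+k) - Π̂(l)| ≤ (S · 2S_k)^{1/2} + S_k`. -/
theorem Pihat_increment_bound (d : ℕ) (Pi : (Fin d → ℤ) → ℝ)
    (hsymm : ∀ x, Pi (-x) = Pi x) (hsum : Summable fun x => |Pi x|)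
    (k l : Fin d → ℝ)
    (S Sk : ℝ) (hS : S = ∑' x : Fin d → ℤ, |Pi x|)
    (hSk : Sk = ∑' x : Fin d → ℤ, (1 - Real.cos (∑ i, k i * (x i : ℝ))) * |Pi x|) :
    |fourierZd d Pi (l + k) - fourierZd d Pi l| ≤ Real.sqrt (S * (2 * Sk)) + Sk := by
  classical
  set b : (Fin d → ℤ) → ℝ := fun x => ∑ i, k i * (x i : ℝ) with hb
  set a : (Fin d → ℤ) → ℝ := fun x => ∑ i, l i * (x i : ℝ) with ha
  -- summability facts
  have hcos_nonneg : ∀ x, 0 ≤ 1 - Real.cos (b x) := fun x => by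
    linarith [Real.cos_le_one (b x)]
  have hsum1 : Summable fun x => Real.cos (a x + b x) * Pi x :=
    hsum.of_norm_bounded (fun x => by
      rw [Real.norm_eq_abs, abs_mul]
      exact mul_le_of_le_one_left (abs_nonneg _) (Real.abs_cos_le_one _))
  have hsum2 : Summable fun x => Real.cos (a x) * Pi x :=
    hsum.of_norm_bounded (fun x => by
      rw [Real.norm_eq_abs, abs_mul]
      exact mul_le_of_le_one_left (abs_nonneg _) (Real.abs_cos_le_one _))
  have hsumSin : Summable fun x => |Real.sin (b x)| * |Pi x| :=
    hsum.of_nonneg_of_le (fun x => by positivity)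
      (fun x => mul_le_of_le_one_left (abs_nonneg _) (Real.abs_sin_le_one _))
  have hsumSk : Summable fun x => (1 - Real.cos (b x)) * |Pi x| :=
    hsum.mul_left 2 |>.of_nonneg_of_le
      (fun x => mul_nonneg (hcos_nonneg x) (abs_nonneg _))
      (fun x => mul_le_mul_of_nonneg_right
        (by linarith [Real.neg_one_le_cos (b x)]) (abs_nonneg _))
  have hsumSin2 : Summable fun x => Real.sin (b x) ^ 2 * |Pi x| :=
    hsum.of_nonneg_of_le (fun x => by positivity)
      (fun x => mul_le_of_le_one_left (abs_nonneg _) (by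
        nlinarith [Real.abs_sin_le_one (b x), abs_nonneg (Real.sin (b x)),
          sq_abs (Real.sin (b x))]))
  have hSnn : 0 ≤ S := hS ▸ tsum_nonneg (fun x => abs_nonneg _)
  have hSknn : 0 ≤ Sk := hSk ▸ tsum_nonneg (fun x => mul_nonneg (hcos_nonneg x) (abs_nonneg _))
  -- rewrite the difference
  have hlk : ∀ x : Fin d → ℤ, (∑ i, (l + k) i * (x i : ℝ)) = a x + b x := by
    intro x
    simp only [_root_.Pi.add_apply, add_mul, Finset.sum_add_distrib, ha, hb]
  have hdiff : fourierZd d Pi (l + k) - fourierZd d Pi l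
      = ∑' x, (Real.cos (a x + b x) - Real.cos (a x)) * Pi x := by
    rw [fourierZd, fourierZd]
    simp_rw [hlk, sub_mul]
    exact (hsum1.tsum_sub hsum2).symm
  rw [hdiff]
  have habs : |∑' x, (Real.cos (a x + b x) - Real.cos (a x)) * Pi x|
      ≤ ∑' x, (|Real.sin (b x)| * |Pi x| + (1 - Real.cos (b x)) * |Pi x|) := by
    have hle : ∀ x, |(Real.cos (a x + b x) - Real.cos (a x)) * Pi x|
        ≤ |Real.sin (b x)| * |Pi x| + (1 - Real.cos (b x)) * |Pi x| := by
      intro x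
      rw [abs_mul, ← add_mul]
      exact mul_le_mul_of_nonneg_right (cos_increment (a x) (b x)) (abs_nonneg _)
    calc |∑' x, (Real.cos (a x + b x) - Real.cos (a x)) * Pi x|
        ≤ ∑' x, |(Real.cos (a x + b x) - Real.cos (a x)) * Pi x| := by
          simpa only [Real.norm_eq_abs] using
            norm_tsum_le_tsum_norm (f := fun x =>
              (Real.cos (a x + b x) - Real.cos (a x)) * Pi x)
              (by simpa only [Real.norm_eq_abs] using
                ((hsumSin.add hsumSk).of_nonneg_of_le (fun x => abs_nonneg _) hle))
      _ ≤ _ := Summable.tsum_le_tsum hle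
          ((hsumSin.add hsumSk).of_nonneg_of_le (fun x => abs_nonneg _) hle)
          (hsumSin.add hsumSk)
  refine habs.trans ?_
  rw [hsumSin.tsum_add hsumSk, ← hSk]
  refine add_le_add_left ?_ Sk
  -- Cauchy-Schwarz step
  have key : ∀ s : Finset (Fin d → ℤ),
      ∑ x ∈ s, |Real.sin (b x)| * |Pi x| ≤ Real.sqrt (S * (2 * Sk)) := by
    intro s
    have hCS := Finset.sum_mul_sq_le_sq_mul_sq s
      (fun x => |Real.sin (b x)| * Real.sqrt |Pi x|) (fun x => Real.sqrt |Pi x|)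
    have heq : ∀ x, (|Real.sin (b x)| * Real.sqrt |Pi x|) * Real.sqrt |Pi x|
        = |Real.sin (b x)| * |Pi x| := by
      intro x
      rw [mul_assoc, Real.mul_self_sqrt (abs_nonneg _)]
    have heq2 : ∀ x, (|Real.sin (b x)| * Real.sqrt |Pi x|) ^ 2
        = Real.sin (b x) ^ 2 * |Pi x| := by
      intro x
      rw [mul_pow, sq_abs, Real.sq_sqrt (abs_nonneg _)]
    have heq3 : ∀ x, (Real.sqrt |Pi x|) ^ 2 = |Pi x| := fun x => Real.sq_sqrt (abs_nonneg _)
    simp_rw [heq, heq2, heq3] at hCS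
    have h1 : ∑ x ∈ s, Real.sin (b x) ^ 2 * |Pi x| ≤ 2 * Sk := by
      have hterm : ∀ x, Real.sin (b x) ^ 2 * |Pi x|
          ≤ 2 * ((1 - Real.cos (b x)) * |Pi x|) := by
        intro x
        have := Real.sin_sq_add_cos_sq (b x)
        nlinarith [mul_nonneg (mul_nonneg (hcos_nonneg x) (hcos_nonneg x)) (abs_nonneg (Pi x)),
          abs_nonneg (Pi x)]
      calc ∑ x ∈ s, Real.sin (b x) ^ 2 * |Pi x|
          ≤ ∑ x ∈ s, 2 * ((1 - Real.cos (b x)) * |Pi x|) := Finset.sum_le_sum fun x _ => hterm x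
        _ ≤ 2 * Sk := by
            rw [← Finset.mul_sum, hSk]
            exact mul_le_mul_of_nonneg_left
              (hsumSk.sum_le_tsum s (fun x _ => mul_nonneg (hcos_nonneg x) (abs_nonneg _)))
              (by norm_num)
    have h2 : ∑ x ∈ s, |Pi x| ≤ S := hS ▸ hsum.sum_le_tsum s (fun x _ => abs_nonneg _)
    have hsq : (∑ x ∈ s, |Real.sin (b x)| * |Pi x|) ^ 2 ≤ S * (2 * Sk) := by
      refine hCS.trans ?_
      have hnn1 : 0 ≤ ∑ x ∈ s, Real.sin (b x) ^ 2 * |Pi x| :=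
        Finset.sum_nonneg fun x _ => by positivity
      have hnn2 : 0 ≤ ∑ x ∈ s, |Pi x| := Finset.sum_nonneg fun x _ => abs_nonneg _
      calc (∑ x ∈ s, Real.sin (b x) ^ 2 * |Pi x|) * ∑ x ∈ s, |Pi x|
          ≤ (2 * Sk) * S := mul_le_mul h1 h2 hnn2 (by linarith)
        _ = S * (2 * Sk) := by ring
    have hnn : 0 ≤ ∑ x ∈ s, |Real.sin (b x)| * |Pi x| :=
      Finset.sum_nonneg fun x _ => by positivity
    calc ∑ x ∈ s, |Real.sin (b x)| * |Pi x|
        = Real.sqrt ((∑ x ∈ s, |Real.sin (b x)| * |Pi x|) ^ 2) := (Real.sqrt_sq hnn).symm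
      _ ≤ Real.sqrt (S * (2 * Sk)) := Real.sqrt_le_sqrt hsq
  exact hsumSin.tsum_le_of_sum_le key
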